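/- For any field F, the sequence of elementary symmetric polynomials in the squares e₁(x₁²,…,xₙ²), e₂(x₁²,…,xₙ²), …, eₙ(x₁²,…,xₙ²) is a regular sequence in F[x₁,…,xₙ]. -/

import Mathlib

open MvPolynomial

namespace RegAux

variable {σ : Type} {R : Type*} [CommRing R]

/-- `a` is a non-zero-divisor modulo `J`. -/
def Nzd {A : Type*} [CommRing A] (J : Ideal A) (a : A) : Prop :=
  ∀ x, a * x ∈ J → x ∈ J

/-- homogeneous element of positive degree -/
def HomPos (a : MvPolynomial σ R) : Prop := ∃ d, 0 < d ∧ a.IsHomogeneous d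

/-- ideal spanned by homogeneous elements -/
def HomSpan (J : Ideal (MvPolynomial σ R)) : Prop :=
  ∃ S : Set (MvPolynomial σ R), (∀ s ∈ S, ∃ d, s.IsHomogeneous d) ∧ J = Ideal.span S

lemma homogeneousComponent_mul_hom {s : MvPolynomial σ R} {ds : ℕ}
    (hs : s.IsHomogeneous ds) (c : MvPolynomial σ R) (d : ℕ) :
    ∃ c', homogeneousComponent d (c * s) = c' * s ∧
      (d < ds → homogeneousComponent d (c * s) = 0) := by
  classical
  have hc : c = ∑ e ∈ Finset.range (c.totalDegree + 1), homogeneousComponent e c :=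
    (sum_homogeneousComponent c).symm
  have : homogeneousComponent d (c * s) =
      ∑ e ∈ Finset.range (c.totalDegree + 1),
        homogeneousComponent d (homogeneousComponent e c * s) := by
    conv_lhs => rw [hc, Finset.sum_mul, map_sum]
  have hterm : ∀ e, homogeneousComponent d (homogeneousComponent e c * s) =
      if d = e + ds then homogeneousComponent e c * s else 0 := by
    intro e
    have hmem : (homogeneousComponent e c * s) ∈ homogeneousSubmodule σ R (e + ds) := by
      rw [mem_homogeneousSubmodule]
      exact (homogeneousComponent_isHomogeneous e c).mul hs
    exact homogeneousComponent_of_mem hmem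
  refine ⟨∑ e ∈ Finset.range (c.totalDegree + 1),
      if d = e + ds then homogeneousComponent e c else 0, ?_, ?_⟩
  · rw [this, Finset.sum_mul]
    refine Finset.sum_congr rfl fun e _ => ?_
    rw [hterm e]
    split <;> simp
  · intro hd
    rw [this]
    refine Finset.sum_eq_zero fun e _ => ?_
    rw [hterm e, if_neg]
    omega

lemma homogeneousComponent_mem_span {S : Set (MvPolynomial σ R)}
    (hS : ∀ s ∈ S, ∃ d, s.IsHomogeneous d) {p : MvPolynomial σ R}
    (hp : p ∈ Ideal.span S) (d : ℕ) : homogeneousComponent d p ∈ Ideal.span S := by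
  classical
  obtain ⟨c, hsupp, rfl⟩ := Submodule.mem_span_set.mp hp
  rw [Finsupp.sum, map_sum]
  refine Ideal.sum_mem _ fun s hs => ?_
  have hsS : s ∈ S := hsupp hs
  obtain ⟨ds, hds⟩ := hS s hsS
  obtain ⟨c', hc', -⟩ := homogeneousComponent_mul_hom hds (c s) d
  rw [smul_eq_mul, hc']
  exact Ideal.mul_mem_left _ _ (Ideal.subset_span hsS)

lemma mem_of_forall_pow {J : Ideal (MvPolynomial σ R)} (hJ : HomSpan J)
    {a : MvPolynomial σ R} (ha : HomPos a) {g : MvPolynomial σ R}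
    (h : ∀ k : ℕ, ∃ c, g - a ^ k * c ∈ J) : g ∈ J := by
  classical
  obtain ⟨S, hS, rfl⟩ := hJ
  obtain ⟨da, hda, hahom⟩ := ha
  have key : ∀ d, homogeneousComponent d g ∈ Ideal.span S := by
    intro d
    obtain ⟨c, hc⟩ := h (d + 1)
    have h1 : homogeneousComponent d (g - a ^ (d + 1) * c) ∈ Ideal.span S :=
      homogeneousComponent_mem_span hS hc d
    have h2 : homogeneousComponent d (a ^ (d + 1) * c) = 0 := by
      have hpow : (a ^ (d + 1)).IsHomogeneous (da * (d + 1)) := hahom.pow _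
      obtain ⟨c', -, hz⟩ := homogeneousComponent_mul_hom hpow c d
      rw [mul_comm]
      exact hz (by nlinarith)
    rw [map_sub, h2, sub_zero] at h1
    exact h1
  rw [← sum_homogeneousComponent g]
  exact Ideal.sum_mem _ fun d _ => key d

section Part2
variable {σ : Type} {R : Type*} [CommRing R]

lemma mem_sup_span_singleton {A : Type*} [CommRing A] {J : Ideal A} {a x : A} :
    x ∈ J ⊔ Ideal.span {a} ↔ ∃ y, x - a * y ∈ J := by
  rw [Submodule.mem_sup]
  constructor
  · rintro ⟨y, hy, z, hz, rfl⟩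
    obtain ⟨r, rfl⟩ := Ideal.mem_span_singleton'.mp hz
    exact ⟨r, by rw [mul_comm]; simpa⟩
  · rintro ⟨y, hy⟩
    exact ⟨x - a * y, hy, a * y, Ideal.mem_span_singleton'.mpr ⟨y, by ring⟩, by ring⟩

lemma nzd_swap {J : Ideal (MvPolynomial σ R)} (hJ : HomSpan J)
    {a b : MvPolynomial σ R} (ha : HomPos a)
    (h1 : Nzd J a) (h2 : Nzd (J ⊔ Ideal.span {a}) b) :
    Nzd J b ∧ Nzd (J ⊔ Ideal.span {b}) a := by
  constructor
  · intro g hg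
    have key : ∀ k : ℕ, ∃ g', g - a ^ k * g' ∈ J ∧ b * g' ∈ J := by
      intro k
      induction k with
      | zero => exact ⟨g, by simpa using J.zero_mem, hg⟩
      | succ k ih =>
        obtain ⟨g', hg1, hg2⟩ := ih
        have : g' ∈ J ⊔ Ideal.span {a} := h2 g' (Ideal.mem_sup_left hg2)
        obtain ⟨g'', hg''⟩ := mem_sup_span_singleton.mp this
        refine ⟨g'', ?_, ?_⟩
        · have : g - a ^ (k+1) * g'' = (g - a ^ k * g') + a ^ k * (g' - a * g'') := by ring
          rw [this]
          exact J.add_mem hg1 (J.mul_mem_left _ hg'')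
        · apply h1
          have : a * (b * g'') = b * (g' - a * g'') * (-1) + b * g' := by ring
          rw [this]
          exact J.add_mem (J.mul_mem_right _ (J.mul_mem_left _ hg'')) hg2
    exact mem_of_forall_pow hJ ha fun k => (key k).imp fun g' h => h.1
  · intro x hx
    obtain ⟨h, hh⟩ := mem_sup_span_singleton.mp hx
    have hbh : b * h ∈ J ⊔ Ideal.span {a} := by
      apply Ideal.mem_sup_left at hh
      have : b * h = (a * x - (a * x - b * h)) * 1 := by ring
      rw [this]
      exact Ideal.mul_mem_right _ _ (Submodule.sub_mem _ (Ideal.mem_sup_right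
        (Ideal.mem_span_singleton'.mpr ⟨x, mul_comm x a⟩)) hh)
    have := h2 h hbh
    obtain ⟨h₁, hh₁⟩ := mem_sup_span_singleton.mp this
    rw [mem_sup_span_singleton]
    refine ⟨h₁, h1 _ ?_⟩
    have : a * (x - b * h₁) = (a * x - b * h) + b * (h - a * h₁) := by ring
    rw [this]
    exact J.add_mem hh (J.mul_mem_left _ hh₁)

/-- regular sequence of elements of a list, modulo a base ideal -/
def RegModSeq {A : Type*} [CommRing A] : Ideal A → List A → Prop
  | _, [] => True
  | J, a :: l => Nzd J a ∧ RegModSeq (J ⊔ Ideal.span {a}) l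

lemma homSpan_sup_span {J : Ideal (MvPolynomial σ R)} (hJ : HomSpan J)
    {a : MvPolynomial σ R} (ha : HomPos a) : HomSpan (J ⊔ Ideal.span {a}) := by
  obtain ⟨S, hS, rfl⟩ := hJ
  obtain ⟨d, -, hd⟩ := ha
  exact ⟨S ∪ {a}, by rintro s (hs | rfl); exacts [hS s hs, ⟨d, hd⟩],
    by rw [Ideal.span_union]⟩

lemma regModSeq_perm {l l' : List (MvPolynomial σ R)} (hp : l.Perm l')
    {J : Ideal (MvPolynomial σ R)} (hJ : HomSpan J)
    (hl : ∀ a ∈ l, HomPos a) (h : RegModSeq J l) : RegModSeq J l' := by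
  induction hp generalizing J with
  | nil => trivial
  | cons x _ ih =>
    obtain ⟨h1, h2⟩ := h
    exact ⟨h1, ih (homSpan_sup_span hJ (hl x (by simp)))
      (fun a ha => hl a (by simp [ha])) h2⟩
  | swap x y l =>
    obtain ⟨h1, h2, h3⟩ := h
    have hy : HomPos y := hl y (by simp)
    obtain ⟨g1, g2⟩ := nzd_swap hJ hy h1 h2
    refine ⟨g1, g2, ?_⟩
    have : J ⊔ Ideal.span {y} ⊔ Ideal.span {x} = J ⊔ Ideal.span {x} ⊔ Ideal.span {y} := by
      rw [sup_assoc, sup_assoc, sup_comm (Ideal.span {y})]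
    rwa [← this]
  | trans p1 p2 ih1 ih2 =>
    exact ih2 hJ (fun a ha => hl a (p1.mem_iff.mpr ha)) (ih1 hJ hl h)

lemma span_list_cons {A : Type*} [CommRing A] (a : A) (t : List A) :
    Ideal.span {x | x ∈ a :: t} = Ideal.span {a} ⊔ Ideal.span {x | x ∈ t} := by
  have : {x : A | x ∈ a :: t} = {a} ∪ {x | x ∈ t} := by ext; simp
  rw [this, Ideal.span_union]

lemma regModSeq_append {A : Type*} [CommRing A] (l₁ l₂ : List A) (J : Ideal A) :
    RegModSeq J (l₁ ++ l₂) ↔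
      RegModSeq J l₁ ∧ RegModSeq (J ⊔ Ideal.span {x | x ∈ l₁}) l₂ := by
  induction l₁ generalizing J with
  | nil =>
    simp only [List.nil_append, RegModSeq]
    have : {x : A | x ∈ ([] : List A)} = ∅ := by simp
    rw [this, Ideal.span_empty, sup_bot_eq]
    tauto
  | cons a l₁ ih =>
    simp only [List.cons_append, RegModSeq, ih, and_assoc, span_list_cons,
      ← sup_assoc]

lemma regModSeq_iff_nzd {A : Type*} [CommRing A] (l : List A) (J : Ideal A) :
    RegModSeq J l ↔ ∀ (i : ℕ) (h : i < l.length),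
      Nzd (J ⊔ Ideal.span {x | x ∈ l.take i}) l[i] := by
  induction l generalizing J with
  | nil => simp [RegModSeq]
  | cons a l ih =>
    simp only [RegModSeq, ih]
    constructor
    · rintro ⟨h1, h2⟩ i hi
      match i with
      | 0 => simpa using h1
      | (j+1) =>
        simp only [List.take_succ_cons, List.getElem_cons_succ, span_list_cons,
          ← sup_assoc]
        exact h2 j (by simpa using hi)
    · intro h
      constructor
      · have h0 := h 0 (by simp); simp at h0; exact h0
      · intro j hj
        have := h (j+1) (by simpa using hj)
        simpa only [List.take_succ_cons, List.getElem_cons_succ, span_list_cons,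
          ← sup_assoc] using this

end Part2
section Part3

open Finset in
/-- elementary symmetric polynomial in the squares of the variables -/
noncomputable def Esq (σ : Type) (R : Type*) [CommRing R] [Fintype σ] (k : ℕ) :
    MvPolynomial σ R :=
  ∑ s ∈ Finset.powersetCard k Finset.univ, ∏ i ∈ s, X i ^ 2

variable {σ : Type} [DecidableEq σ] {R : Type*} [CommRing R]

lemma aeval_sq_esymm [Fintype σ] (k : ℕ) :
    aeval (fun i : σ => (X i : MvPolynomial σ R) ^ 2) (esymm σ R k) = Esq σ R k := by
  simp_rw [esymm, Esq, map_sum, map_prod, aeval_X]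

lemma Esq_isHomogeneous [Fintype σ] (k : ℕ) : (Esq σ R k).IsHomogeneous (2 * k) := by
  apply MvPolynomial.IsHomogeneous.sum
  intro s hs
  have hcard : s.card = k := (Finset.mem_powersetCard.mp hs).2
  have := MvPolynomial.IsHomogeneous.prod s (fun i => (X i : MvPolynomial σ R) ^ 2)
    (fun _ => 2) (fun i _ => MvPolynomial.isHomogeneous_X_pow i 2)
  simpa [Finset.sum_const, hcard, mul_comm] using this

lemma homPos_Esq [Fintype σ] {k : ℕ} (hk : 0 < k) : HomPos (Esq σ R k) :=
  ⟨2 * k, by omega, Esq_isHomogeneous k⟩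

lemma homPos_X (i : σ) : HomPos (X i : MvPolynomial σ R) :=
  ⟨1, one_pos, MvPolynomial.isHomogeneous_X _ _⟩

lemma Esq_card [Fintype σ] : Esq σ R (Fintype.card σ) = ∏ i : σ, X i ^ 2 := by
  rw [Esq, ← Finset.card_univ, Finset.powersetCard_self, Finset.sum_singleton]

/-- the algebra map that kills all variables outside `P` -/
noncomputable def keepHom (P : Finset σ) :
    MvPolynomial σ R →ₐ[R] MvPolynomial {x // x ∈ P} R :=
  aeval (fun i => if h : i ∈ P then X (⟨i, h⟩ : {x // x ∈ P}) else 0)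

noncomputable def liftHom (P : Finset σ) :
    MvPolynomial {x // x ∈ P} R →ₐ[R] MvPolynomial σ R :=
  rename Subtype.val

lemma keep_lift (P : Finset σ) (q : MvPolynomial {x // x ∈ P} R) :
    keepHom P (liftHom P q) = q := by
  rw [liftHom, keepHom, aeval_rename]
  have : ((fun i => if h : i ∈ P then X (⟨i, h⟩ : {x // x ∈ P}) else 0) ∘ Subtype.val)
      = (X : {x // x ∈ P} → MvPolynomial {x // x ∈ P} R) := by
    funext w
    simp only [Function.comp_apply, dif_pos w.2]
  rw [this, aeval_X_left_apply]

lemma sub_lift_keep_mem (P : Finset σ) (p : MvPolynomial σ R) :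
    p - liftHom P (keepHom P p) ∈ Ideal.span (X '' {i | i ∉ P}) := by
  induction p using MvPolynomial.induction_on with
  | C a => simp only [keepHom, aeval_C, liftHom]; rw [algebraMap_eq, rename_C, sub_self];
             exact Ideal.zero_mem _
  | add p q hp hq =>
    have : p + q - liftHom P (keepHom P (p + q))
        = (p - liftHom P (keepHom P p)) + (q - liftHom P (keepHom P q)) := by
      rw [map_add, map_add]; ring
    rw [this]; exact Ideal.add_mem _ hp hq
  | mul_X p i hp =>
    by_cases h : i ∈ P
    · have heq : keepHom P (p * X i) = keepHom P p * X ⟨i, h⟩ := by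
        rw [map_mul, keepHom, aeval_X, dif_pos h]
      have : p * X i - liftHom P (keepHom P (p * X i))
          = (p - liftHom P (keepHom P p)) * X i := by
        rw [heq, map_mul, liftHom, rename_X]; ring
      rw [this]
      exact Ideal.mul_mem_right _ _ hp
    · have heq : keepHom P (p * X i) = 0 := by
        rw [map_mul, keepHom, aeval_X, dif_neg h, mul_zero]
      rw [heq, map_zero, sub_zero]
      exact Ideal.mul_mem_left _ _ (Ideal.subset_span ⟨i, h, rfl⟩)

lemma nzd_of_keep (P : Finset σ) (gens : Set (MvPolynomial σ R)) (a : MvPolynomial σ R)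
    (h : Nzd (Ideal.span (keepHom P '' gens)) (keepHom P a)) :
    Nzd (Ideal.span (X '' {i | i ∉ P}) ⊔ Ideal.span gens) a := by
  intro x hx
  have hmap : ∀ y, y ∈ Ideal.span (X '' {i | i ∉ P}) ⊔ Ideal.span gens →
      keepHom P y ∈ Ideal.span (keepHom (R := R) P '' gens) := by
    intro y hy
    rw [← Ideal.span_union] at hy
    have h1 : keepHom P y ∈ Ideal.map (keepHom (R := R) P)
        (Ideal.span ((X '' {i | i ∉ P}) ∪ gens)) := Ideal.mem_map_of_mem _ hy
    rw [Ideal.map_span, Set.image_union] at h1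
    refine Ideal.span_le.mpr ?_ h1
    rintro y (⟨-, ⟨i, hi, rfl⟩, rfl⟩ | hy2)
    · have : keepHom (R := R) P (X i) = 0 := by rw [keepHom, aeval_X, dif_neg hi]
      rw [this]; exact Ideal.zero_mem _
    · exact Ideal.subset_span hy2
  have h1 : keepHom P a * keepHom P x ∈ Ideal.span (keepHom (R := R) P '' gens) := by
    rw [← map_mul]; exact hmap _ hx
  have h2 := h _ h1
  have h3 : liftHom P (keepHom P x) ∈ Ideal.span (X '' {i | i ∉ P}) ⊔ Ideal.span gens := by
    have h4 : liftHom P (keepHom P x) ∈ Ideal.map (liftHom (R := R) P)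
        (Ideal.span (keepHom (R := R) P '' gens)) := Ideal.mem_map_of_mem _ h2
    rw [Ideal.map_span] at h4
    refine Ideal.span_le.mpr ?_ h4
    rintro y ⟨-, ⟨g, hg, rfl⟩, rfl⟩
    have : liftHom P (keepHom P g) = g - (g - liftHom P (keepHom P g)) := by ring
    rw [this]
    exact Submodule.sub_mem _ (Ideal.mem_sup_right (Ideal.subset_span hg))
      (Ideal.mem_sup_left (sub_lift_keep_mem P g))
  have : x = (x - liftHom P (keepHom P x)) + liftHom P (keepHom P x) := by ring
  rw [this]
  exact Submodule.add_mem _ (Ideal.mem_sup_left (sub_lift_keep_mem P x)) h3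

lemma keepHom_Esq [Fintype σ] (P : Finset σ) (k : ℕ) :
    keepHom P (Esq σ R k) = Esq {x // x ∈ P} R k := by
  classical
  rw [Esq, map_sum]
  have hterm : ∀ s : Finset σ, keepHom (R := R) P (∏ i ∈ s, X i ^ 2)
      = ∏ i ∈ s, (if h : i ∈ P then X (⟨i, h⟩ : {x // x ∈ P}) else 0) ^ 2 := by
    intro s
    rw [map_prod]
    exact Finset.prod_congr rfl fun i _ => by rw [map_pow, keepHom, aeval_X]
  simp_rw [hterm]
  rw [← Finset.sum_subset (Finset.powersetCard_mono (Finset.subset_univ P))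
    (fun s hs hs' => ?_)]
  · -- now a bijection between powersetCard k P and powersetCard k univ (subtype)
    rw [Esq]
    refine Finset.sum_nbij' (fun s => s.subtype (· ∈ P))
      (fun t => t.map (Function.Embedding.subtype _)) ?_ ?_ ?_ ?_ ?_
    · intro s hs
      obtain ⟨hsub, hcard⟩ := Finset.mem_powersetCard.mp hs
      refine Finset.mem_powersetCard.mpr ⟨Finset.subset_univ _, ?_⟩
      have : (s.subtype (· ∈ P)).map (Function.Embedding.subtype _) = s := by
        rw [Finset.subtype_map, Finset.filter_true_of_mem (fun i hi => hsub hi)]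
      calc (s.subtype (· ∈ P)).card
          = ((s.subtype (· ∈ P)).map (Function.Embedding.subtype _)).card :=
            (Finset.card_map _).symm
        _ = k := by rw [this, hcard]
    · intro t ht
      obtain ⟨-, hcard⟩ := Finset.mem_powersetCard.mp ht
      refine Finset.mem_powersetCard.mpr ⟨?_, by rw [Finset.card_map, hcard]⟩
      rintro i hi
      simp only [Finset.mem_map, Function.Embedding.coe_subtype] at hi
      obtain ⟨w, -, rfl⟩ := hi
      exact w.2
    · intro s hs
      obtain ⟨hsub, -⟩ := Finset.mem_powersetCard.mp hs
      rw [Finset.subtype_map, Finset.filter_true_of_mem (fun i hi => hsub hi)]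
    · intro t ht
      ext w
      simp [Finset.mem_subtype]
    · intro s hs
      obtain ⟨hsub, -⟩ := Finset.mem_powersetCard.mp hs
      have h1 : (s.subtype (· ∈ P)).map (Function.Embedding.subtype _) = s := by
        rw [Finset.subtype_map, Finset.filter_true_of_mem (fun i hi => hsub hi)]
      conv_lhs => rw [← h1]
      rw [Finset.prod_map]
      refine Finset.prod_congr rfl fun w _ => ?_
      simp only [Function.Embedding.coe_subtype, dif_pos w.2]
      exact congrArg (· ^ 2) (dif_pos w.2)
  · -- vanishing of terms with s ⊄ P
    obtain ⟨i, his, hiP⟩ : ∃ i ∈ s, i ∉ P := by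
      by_contra hcon
      push_neg at hcon
      exact hs' (Finset.mem_powersetCard.mpr
        ⟨fun x hx => hcon x hx, (Finset.mem_powersetCard.mp hs).2⟩)
    exact Finset.prod_eq_zero his (by rw [dif_neg hiP, zero_pow two_ne_zero])

end Part3
section Part4

variable {σ : Type} [DecidableEq σ] {R : Type*} [CommRing R]

lemma nzd_span_X_image {U : Set σ} {t : σ} (ht : t ∉ U) :
    Nzd (Ideal.span (X '' U) : Ideal (MvPolynomial σ R)) (X t) := by
  intro x hx
  rw [mem_ideal_span_X_image] at hx ⊢
  intro m hm
  have hmem : Finsupp.single t 1 + m ∈ (X t * x).support := by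
    rw [support_X_mul]
    exact Finset.mem_map.mpr ⟨m, hm, by rw [addLeftEmbedding_apply]⟩
  obtain ⟨i, hiU, hine⟩ := hx _ hmem
  refine ⟨i, hiU, ?_⟩
  have : i ≠ t := fun h => ht (h ▸ hiU)
  rwa [Finsupp.add_apply, Finsupp.single_eq_of_ne' (Ne.symm this), zero_add] at hine

lemma regModSeq_vars (lt : List σ) (hnd : lt.Nodup) (U : Set σ) (hU : ∀ t ∈ lt, t ∉ U) :
    RegModSeq (Ideal.span (X '' U) : Ideal (MvPolynomial σ R)) (lt.map X) := by
  induction lt generalizing U with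
  | nil => trivial
  | cons t lt ih =>
    refine ⟨nzd_span_X_image (hU t (by simp)), ?_⟩
    have : Ideal.span (X '' U) ⊔ Ideal.span {(X t : MvPolynomial σ R)}
        = Ideal.span (X '' (U ∪ {t})) := by
      rw [Set.image_union, Ideal.span_union, Set.image_singleton]
    rw [this]
    refine ih (List.nodup_cons.mp hnd).2 _ fun t' ht' => ?_
    rintro (h | h)
    · exact hU t' (by simp [ht']) h
    · exact (List.nodup_cons.mp hnd).1 (by simpa using h ▸ ht')

lemma take_ofFn_set {M : Type*} (g : ℕ → M) (m k : ℕ) (hk : k ≤ m) :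
    {x | x ∈ (List.ofFn (fun j : Fin m => g j)).take k} = {x | ∃ j, j < k ∧ x = g j} := by
  ext x
  simp only [Set.mem_setOf_eq, List.mem_take_iff_getElem, List.getElem_ofFn,
    List.length_ofFn]
  constructor
  · rintro ⟨j, hj, rfl⟩
    exact ⟨j, by omega, rfl⟩
  · rintro ⟨j, hj, rfl⟩
    exact ⟨j, by omega, rfl⟩

variable (F : Type*) [Field F]

/-- the inner step: transfer regularity from the subtype on `W` -/
lemma nzd_step [Fintype σ] (W : Finset σ) {k : ℕ}
    (hreg : RegModSeq (⊥ : Ideal (MvPolynomial {x // x ∈ W} F))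
      (List.ofFn (fun j : Fin W.card => Esq {x // x ∈ W} F (j + 1))))
    (hk : k < W.card) :
    Nzd (Ideal.span (X '' {i | i ∉ W}) ⊔ Ideal.span {x | ∃ j, j < k ∧ x = Esq σ F (j + 1)})
      (Esq σ F (k + 1)) := by
  apply nzd_of_keep
  have h1 := (regModSeq_iff_nzd _ _).mp hreg k (by simpa using hk)
  rw [List.getElem_ofFn] at h1
  have h2 : {x | x ∈ (List.ofFn (fun j : Fin W.card => Esq {x // x ∈ W} F (j + 1))).take k}
      = {x | ∃ j, j < k ∧ x = Esq {x // x ∈ W} F (j + 1)} :=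
    take_ofFn_set (fun j => Esq {x // x ∈ W} F (j + 1)) _ _ (le_of_lt hk)
  rw [h2, bot_sup_eq] at h1
  have h3 : keepHom W '' {x | ∃ j, j < k ∧ x = Esq σ F (j + 1)}
      = {x | ∃ j, j < k ∧ x = Esq {x // x ∈ W} F (j + 1)} := by
    ext y
    constructor
    · rintro ⟨-, ⟨j, hj, rfl⟩, rfl⟩
      exact ⟨j, hj, keepHom_Esq W (j + 1)⟩
    · rintro ⟨j, hj, rfl⟩
      exact ⟨Esq σ F (j + 1), ⟨j, hj, rfl⟩, keepHom_Esq W (j + 1)⟩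
  rw [h3, keepHom_Esq]
  simpa using h1

lemma main_induction : ∀ (n : ℕ) (σ : Type) [DecidableEq σ] [Fintype σ],
    Fintype.card σ = n →
    RegModSeq (⊥ : Ideal (MvPolynomial σ F))
      (List.ofFn (fun k : Fin n => Esq σ F ((k : ℕ) + 1))) := by
  intro n
  induction n using Nat.strong_induction_on with
  | _ n ih =>
  intro σ _ _ hcard
  rw [regModSeq_iff_nzd]
  intro i hi'
  have hi : i < n := by simpa using hi'
  rw [List.getElem_ofFn,
    take_ofFn_set (fun j => Esq σ F (j + 1)) n i (le_of_lt hi), bot_sup_eq]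
  have hbot : (⊥ : Ideal (MvPolynomial σ F)) = Ideal.span (X '' (∅ : Set σ)) := by
    simp
  have hHomSpanBot : HomSpan (⊥ : Ideal (MvPolynomial σ F)) :=
    ⟨∅, by simp, by simp⟩
  by_cases hcase : i + 1 < n
  · -- case A : use a subset W of card i+1
    obtain ⟨W, -, hWcard⟩ := Finset.exists_subset_card_eq
      (show i + 1 ≤ (Finset.univ : Finset σ).card by
        rw [Finset.card_univ, hcard]; omega)
    have hWcard' : Fintype.card {x // x ∈ W} = i + 1 := by
      rw [Fintype.card_coe, hWcard]
    have hLVset : {x | x ∈ (Wᶜ.toList.map X : List (MvPolynomial σ F))}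
        = (X '' {j | j ∉ W} : Set (MvPolynomial σ F)) := by
      ext x
      simp only [Set.mem_setOf_eq, List.mem_map, Finset.mem_toList, Set.mem_image,
        Finset.mem_compl, Set.mem_setOf_eq]
      try tauto
    have hreg1 : RegModSeq (⊥ : Ideal (MvPolynomial σ F))
        ((Wᶜ.toList.map X) ++ List.ofFn (fun k : Fin (i + 1) => Esq σ F ((k : ℕ) + 1))) := by
      rw [regModSeq_append]
      constructor
      · rw [hbot]
        exact regModSeq_vars Wᶜ.toList (Finset.nodup_toList _) ∅ (by simp)
      · rw [bot_sup_eq, hLVset, regModSeq_iff_nzd]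
        intro k hk'
        have hk : k < i + 1 := by simpa using hk'
        rw [List.getElem_ofFn,
          take_ofFn_set (fun j => Esq σ F (j + 1)) (i + 1) k (le_of_lt hk)]
        exact nzd_step F W (by rw [hWcard]; exact ih (i + 1) hcase _ hWcard')
          (by rw [hWcard]; omega)
    have hreg2 : RegModSeq (⊥ : Ideal (MvPolynomial σ F))
        (List.ofFn (fun k : Fin (i + 1) => Esq σ F ((k : ℕ) + 1)) ++ (Wᶜ.toList.map X)) := by
      refine regModSeq_perm List.perm_append_comm hHomSpanBot ?_ hreg1
      intro a ha
      rcases List.mem_append.mp ha with h | h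
      · obtain ⟨t, -, rfl⟩ := List.mem_map.mp h
        exact homPos_X t
      · obtain ⟨j, rfl⟩ := List.mem_ofFn.mp h
        exact homPos_Esq (by omega)
    have hreg3 := ((regModSeq_append _ _ _).mp hreg2).1
    have h4 := (regModSeq_iff_nzd _ _).mp hreg3 i (by simp)
    rw [List.getElem_ofFn,
      take_ofFn_set (fun j => Esq σ F (j + 1)) (i + 1) i (by omega), bot_sup_eq] at h4
    exact h4
  · -- case B : i + 1 = n
    have hin : i + 1 = n := by omega
    have hesq : Esq σ F (i + 1) = ∏ t : σ, X t ^ 2 := by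
      rw [← Esq_card, hcard, hin]
    have hXt : ∀ t : σ, Nzd (Ideal.span {x | ∃ j, j < i ∧ x = Esq σ F (j + 1)})
        (X t : MvPolynomial σ F) := by
      intro t
      have hcardc : Fintype.card {x // x ∈ ({t}ᶜ : Finset σ)} = i := by
        rw [Fintype.card_coe, Finset.card_compl, hcard, Finset.card_singleton]
        omega
      have hccard : ({t}ᶜ : Finset σ).card = i := by
        rw [Finset.card_compl, hcard, Finset.card_singleton]; omega
      have hset : (X '' {j | j ∉ ({t}ᶜ : Finset σ)} : Set (MvPolynomial σ F))
          = {(X t : MvPolynomial σ F)} := by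
        ext x
        simp [Finset.mem_compl]
      have hreg1 : RegModSeq (⊥ : Ideal (MvPolynomial σ F))
          (X t :: List.ofFn (fun k : Fin i => Esq σ F ((k : ℕ) + 1))) := by
        constructor
        · intro x hx
          rw [Ideal.mem_bot] at hx ⊢
          rcases mul_eq_zero.mp hx with h | h
          · exact absurd h (X_ne_zero t)
          · exact h
        · rw [regModSeq_iff_nzd]
          intro k hk'
          have hk : k < i := by simpa using hk'
          rw [List.getElem_ofFn,
            take_ofFn_set (fun j => Esq σ F (j + 1)) i k (le_of_lt hk), bot_sup_eq]
          have h5 := nzd_step F ({t}ᶜ : Finset σ)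
            (by rw [hccard]; exact ih i (by omega) _ hcardc)
            (show k < ({t}ᶜ : Finset σ).card by rw [hccard]; omega)
          rwa [hset] at h5
      have hreg2 : RegModSeq (⊥ : Ideal (MvPolynomial σ F))
          (List.ofFn (fun k : Fin i => Esq σ F ((k : ℕ) + 1)) ++ [X t]) := by
        refine regModSeq_perm ?_ hHomSpanBot ?_ hreg1
        · simpa using (List.perm_append_comm
            (l₁ := [(X t : MvPolynomial σ F)])
            (l₂ := List.ofFn (fun k : Fin i => Esq σ F ((k : ℕ) + 1))))
        · intro a ha
          rcases List.mem_cons.mp ha with rfl | h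
          · exact homPos_X t
          · obtain ⟨j, rfl⟩ := List.mem_ofFn.mp h
            exact homPos_Esq (by omega)
      obtain ⟨hnzd, -⟩ := ((regModSeq_append _ _ _).mp hreg2).2
      have hsetLE : {x | x ∈ List.ofFn (fun k : Fin i => Esq σ F ((k : ℕ) + 1))}
          = {x | ∃ j, j < i ∧ x = Esq σ F (j + 1)} := by
        have h6 := take_ofFn_set (fun j => Esq σ F (j + 1)) i i le_rfl
        rwa [List.take_of_length_le (by simp)] at h6
      rwa [hsetLE, bot_sup_eq] at hnzd
    rw [hesq]
    have hone : Nzd (Ideal.span {x | ∃ j, j < i ∧ x = Esq σ F (j + 1)})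
        (1 : MvPolynomial σ F) := fun x hx => by simpa using hx
    have hmul : ∀ a b : MvPolynomial σ F,
        Nzd (Ideal.span {x | ∃ j, j < i ∧ x = Esq σ F (j + 1)}) a →
        Nzd (Ideal.span {x | ∃ j, j < i ∧ x = Esq σ F (j + 1)}) b →
        Nzd (Ideal.span {x | ∃ j, j < i ∧ x = Esq σ F (j + 1)}) (a * b) := by
      intro a b hA hB x hx
      rw [mul_assoc] at hx
      exact hB x (hA _ hx)
    exact Finset.prod_induction _ _ hmul hone
      (fun t _ => by rw [sq]; exact hmul _ _ (hXt t) (hXt t))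

end Part4
end RegAux
/-- The ideal generated by the terms preceding the i-th one. -/
def prevSpan {R : Type*} [CommRing R] {n : ℕ} (a : Fin n → R) (i : Fin n) : Ideal R :=
  Ideal.span (a '' {j | j < i})

/-- a₁, …, aₙ is a regular sequence: each aᵢ is not a zero divisor
in R/(a₁, …, a_{i-1}). -/
def IsRegSeq {R : Type*} [CommRing R] {n : ℕ} (a : Fin n → R) : Prop :=
  ∀ i : Fin n, ∀ x : R, a i * x ∈ prevSpan a i → x ∈ prevSpan a i

/-- The elementary symmetric polynomials in the squares
e₁(x₁², …, xₙ²), …, eₙ(x₁², …, xₙ²) form a regular sequence in F[x₁, …, xₙ]. -/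
theorem esymm_sq_regular (F : Type*) [Field F] (n : ℕ) :
    IsRegSeq (fun k : Fin n =>
      MvPolynomial.aeval (fun i : Fin n => (MvPolynomial.X i : MvPolynomial (Fin n) F) ^ 2)
        (MvPolynomial.esymm (Fin n) F ((k : ℕ) + 1))) := by
  intro i x
  have hfun : (fun k : Fin n =>
      MvPolynomial.aeval (fun i : Fin n => (MvPolynomial.X i : MvPolynomial (Fin n) F) ^ 2)
        (MvPolynomial.esymm (Fin n) F ((k : ℕ) + 1)))
      = fun k : Fin n => RegAux.Esq (Fin n) F ((k : ℕ) + 1) := by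
    funext k
    exact RegAux.aeval_sq_esymm _
  rw [hfun]
  have hset : ((fun k : Fin n => RegAux.Esq (Fin n) F ((k : ℕ) + 1)) '' {j | j < i})
      = {x | ∃ j, j < (i : ℕ) ∧ x = RegAux.Esq (Fin n) F (j + 1)} := by
    ext y
    constructor
    · rintro ⟨j, hj, rfl⟩
      exact ⟨(j : ℕ), hj, rfl⟩
    · rintro ⟨j, hj, rfl⟩
      exact ⟨⟨j, lt_trans hj i.2⟩, hj, rfl⟩
  have hmain := RegAux.main_induction F n (Fin n) (by simp)
  have h1 := (RegAux.regModSeq_iff_nzd _ _).mp hmain (i : ℕ) (by simpa using i.2)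
  rw [List.getElem_ofFn,
    RegAux.take_ofFn_set (fun j => RegAux.Esq (Fin n) F (j + 1)) n (i : ℕ) (le_of_lt i.2),
    bot_sup_eq] at h1
  intro hx
  unfold prevSpan at hx ⊢
  rw [hset] at hx ⊢
  exact h1 x (by simpa using hx)
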